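/- Let X be a compact path-connected metric space all of whose open balls are path-connected, let Y be a metric space, and let f : X → Y be a nonconstant continuous function, with β > 0 such that f⁻¹(S[f(q),ε']) is nonempty for every q ∈ X and 0 < ε' < β. Let p ∈ X, let (x_n) be a sequence in X converging to p, and let ε and r > 0 satisfy 0 < ε − r and ε + r < β. Then there exists n₀ ∈ ℕ such that for all n > n₀: δ(p, ε − r) − r ≤ δ(x_n, ε) ≤ δ(p, ε + r) + r, where δ(q,ε') := dist(q, f⁻¹(S[f(q),ε'])). -/

import Mathlib

private lemma key_ivt {X Y : Type*} [MetricSpace X] [MetricSpace Y]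
    (hballs : ∀ (q : X) (r : ℝ), 0 < r → IsPathConnected (Metric.ball q r))
    {f : X → Y} (hf : Continuous f) (q w : X) (c σ : ℝ) (hc : 0 < c) (hσ : 0 < σ)
    (hw : c ≤ dist (f q) (f w)) :
    ∃ v, dist (f v) (f q) = c ∧ dist q v ≤ dist q w + σ := by
  have hpos : 0 < dist q w + σ := by positivity
  have hball := hballs q (dist q w + σ) hpos
  have hqm : q ∈ Metric.ball q (dist q w + σ) := by
    simp only [Metric.mem_ball, dist_self]; exact hpos
  have hwm : w ∈ Metric.ball q (dist q w + σ) := by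
    simp only [Metric.mem_ball, dist_comm w q]; linarith
  obtain ⟨γ, hγ⟩ := hball.joinedIn q hqm w hwm
  set g : ℝ → ℝ := fun t => dist (f (γ.extend t)) (f q) with hg
  have hcont : Continuous g := (hf.comp γ.continuous_extend).dist continuous_const
  have hg0 : g 0 = 0 := by simp [hg]
  have hg1 : c ≤ g 1 := by
    simpa [hg, dist_comm] using hw
  have hsub := intermediate_value_Icc (by norm_num : (0:ℝ) ≤ 1) hcont.continuousOn
  have hcmem : c ∈ Set.Icc (g 0) (g 1) := by
    rw [hg0]; exact ⟨hc.le, hg1⟩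
  obtain ⟨t, ht, hgt⟩ := hsub hcmem
  refine ⟨γ.extend t, hgt, ?_⟩
  have : γ.extend t ∈ Metric.ball q (dist q w + σ) := by
    rw [γ.extend_apply ht]; exact hγ _
  rw [Metric.mem_ball, dist_comm] at this
  exact this.le

theorem delta_epsilon_sequence_estimate {X Y : Type*} [MetricSpace X] [MetricSpace Y]
    [CompactSpace X] [PathConnectedSpace X]
    (hballs : ∀ (q : X) (r : ℝ), 0 < r → IsPathConnected (Metric.ball q r))
    (f : X → Y) (hf : Continuous f) (hnc : ∃ a b : X, f a ≠ f b)
    (β : ℝ) (hβ : 0 < β)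
    (hne : ∀ (q : X) (ε' : ℝ), 0 < ε' → ε' < β →
      (f ⁻¹' Metric.sphere (f q) ε').Nonempty)
    (p : X) (x : ℕ → X) (hx : Filter.Tendsto x Filter.atTop (nhds p))
    (ε r : ℝ) (hr : 0 < r) (hεr : 0 < ε - r) (hεrβ : ε + r < β) :
    ∃ n₀ : ℕ, ∀ n : ℕ, n > n₀ →
      Metric.infDist p (f ⁻¹' Metric.sphere (f p) (ε - r)) - r
        ≤ Metric.infDist (x n) (f ⁻¹' Metric.sphere (f (x n)) ε) ∧
      Metric.infDist (x n) (f ⁻¹' Metric.sphere (f (x n)) ε)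
        ≤ Metric.infDist p (f ⁻¹' Metric.sphere (f p) (ε + r)) + r := by
  have hε : 0 < ε := by linarith
  have hεβ : ε < β := by linarith
  have h1 : ∀ᶠ n in Filter.atTop, dist (x n) p < r / 2 :=
    Metric.tendsto_nhds.mp hx (r / 2) (by positivity)
  have hfx : Filter.Tendsto (fun n => f (x n)) Filter.atTop (nhds (f p)) :=
    (hf.tendsto p).comp hx
  have h2 : ∀ᶠ n in Filter.atTop, dist (f (x n)) (f p) < r :=
    Metric.tendsto_nhds.mp hfx r hr
  obtain ⟨n₀, hn₀⟩ := Filter.eventually_atTop.mp (h1.and h2)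
  refine ⟨n₀, fun n hn => ?_⟩
  obtain ⟨hd1, hd2⟩ := hn₀ n hn.le
  -- minimizer for A = f⁻¹ sphere (f p) (ε+r)
  have hAclosed : IsClosed (f ⁻¹' Metric.sphere (f p) (ε + r)) :=
    Metric.isClosed_sphere.preimage hf
  obtain ⟨z, hzA, hzd⟩ := hAclosed.isCompact.exists_infDist_eq_dist
    (hne p (ε + r) (by linarith) hεrβ) p
  -- minimizer for B = f⁻¹ sphere (f (x n)) ε
  have hBclosed : IsClosed (f ⁻¹' Metric.sphere (f (x n)) ε) :=
    Metric.isClosed_sphere.preimage hf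
  obtain ⟨w, hwB, hwd⟩ := hBclosed.isCompact.exists_infDist_eq_dist
    (hne (x n) ε hε hεβ) (x n)
  rw [Set.mem_preimage, Metric.mem_sphere] at hzA hwB
  constructor
  · -- lower bound
    have hc : ε - r ≤ dist (f p) (f w) := by
      have t1 := dist_triangle (f w) (f p) (f (x n))
      rw [dist_comm (f w) (f p)] at t1
      rw [dist_comm (f (x n)) (f p)] at hd2
      linarith [hwB, t1, hd2]
    obtain ⟨v, hv1, hv2⟩ := key_ivt hballs hf p w (ε - r) (r / 2) hεr (by positivity) hc
    have hle : Metric.infDist p (f ⁻¹' Metric.sphere (f p) (ε - r)) ≤ dist p v :=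
      Metric.infDist_le_dist_of_mem (by simpa [Set.mem_preimage, Metric.mem_sphere] using hv1)
    have htri : dist p w ≤ dist p (x n) + dist (x n) w := dist_triangle _ _ _
    rw [dist_comm p (x n)] at htri
    linarith [hwd ▸ htri]
  · -- upper bound
    have hc : ε ≤ dist (f (x n)) (f z) := by
      have := dist_triangle (f p) (f (x n)) (f z)
      rw [dist_comm (f p) (f (x n))] at this
      have hz' : dist (f z) (f p) = ε + r := hzA
      rw [dist_comm] at hz'
      linarith
    obtain ⟨v, hv1, hv2⟩ := key_ivt hballs hf (x n) z ε (r / 2) hε (by positivity) hc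
    have hle : Metric.infDist (x n) (f ⁻¹' Metric.sphere (f (x n)) ε) ≤ dist (x n) v :=
      Metric.infDist_le_dist_of_mem (by simpa [Set.mem_preimage, Metric.mem_sphere] using hv1)
    have htri : dist (x n) z ≤ dist (x n) p + dist p z := dist_triangle _ _ _
    linarith [hzd ▸ htri]
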